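/- Let A_0 = I ∈ R^{d×d} and A_t = A_{t-1} + x_t x_t^⊤/r with r > 0. Then ∑_{t=1}^T x_t^⊤ A_t^{-1} x_t ≤ r·log(det(A_T)). -/

import Mathlib

open Matrix Finset

private lemma vecMulVec_mulVec' {d : ℕ} (v w : Fin d → ℝ) :
    Matrix.vecMulVec v v *ᵥ w = (v ⬝ᵥ w) • v := by
  ext i
  simp only [Matrix.vecMulVec_apply, Matrix.mulVec, dotProduct, Pi.smul_apply,
    smul_eq_mul, Finset.mul_sum, Finset.sum_mul]
  exact Finset.sum_congr rfl fun j _ => by ring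

private lemma vecMulVec_posSemidef {d : ℕ} (r : ℝ) (hr : 0 < r) (v : Fin d → ℝ) :
    (r⁻¹ • Matrix.vecMulVec v v).PosSemidef := by
  refine Matrix.PosSemidef.of_dotProduct_mulVec_nonneg ?_ ?_
  · ext i j
    simp [Matrix.vecMulVec_apply, Matrix.conjTranspose_apply, mul_comm]
  · intro y
    have : (r⁻¹ • Matrix.vecMulVec v v) *ᵥ y = r⁻¹ • ((v ⬝ᵥ y) • v) := by
      rw [Matrix.smul_mulVec, vecMulVec_mulVec']
    rw [this]
    simp only [star_trivial, dotProduct_smul, smul_eq_mul, dotProduct_comm y v]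
    have h1 : (0:ℝ) ≤ (v ⬝ᵥ y) * (v ⬝ᵥ y) := mul_self_nonneg _
    have h2 : (0:ℝ) ≤ r⁻¹ := le_of_lt (inv_pos.2 hr)
    calc (0:ℝ) ≤ r⁻¹ * ((v ⬝ᵥ y) * (v ⬝ᵥ y)) := mul_nonneg h2 h1
    _ = r⁻¹ * (v ⬝ᵥ y * v ⬝ᵥ y) := by ring

private lemma key_identity {d : ℕ} (r : ℝ) (hr : 0 < r) (v : Fin d → ℝ)
    (B : Matrix (Fin d) (Fin d) ℝ) (hB : B.PosDef) :
    v ⬝ᵥ (B + r⁻¹ • Matrix.vecMulVec v v)⁻¹ *ᵥ v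
      = r * (1 - B.det / (B + r⁻¹ • Matrix.vecMulVec v v).det) := by
  set M := B + r⁻¹ • Matrix.vecMulVec v v with hM
  have hMpd : M.PosDef := hB.add_posSemidef (vecMulVec_posSemidef r hr v)
  have hBdet : IsUnit B.det := (isUnit_iff_ne_zero).2 (ne_of_gt hB.det_pos)
  have hMdet : IsUnit M.det := (isUnit_iff_ne_zero).2 (ne_of_gt hMpd.det_pos)
  set s : ℝ := v ⬝ᵥ B⁻¹ *ᵥ v with hs
  have hs0 : 0 ≤ s := by simpa using hB.inv.posSemidef.dotProduct_mulVec_nonneg v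
  have hrs : 0 < r + s := by linarith
  -- determinant lemma
  have hdet : M.det = B.det * (1 + r⁻¹ * s) := by
    have hcr : M = B + Matrix.replicateCol Unit (r⁻¹ • v) * Matrix.replicateRow Unit v := by
      rw [hM, ← Matrix.vecMulVec_eq Unit]
      congr 1
      ext i j
      simp [Matrix.vecMulVec_apply, mul_assoc]
    rw [hcr, Matrix.det_add_replicateCol_mul_replicateRow hBdet]
    congr 1
    rw [Matrix.det_unique, Matrix.add_apply, Matrix.one_apply_eq]
    congr 1
    simp [Matrix.mul_apply, Matrix.replicateRow_apply, Matrix.replicateCol_apply, dotProduct,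
      Matrix.mulVec, hs, Finset.mul_sum, Finset.sum_mul, mul_comm, mul_assoc, mul_left_comm]
    refine Finset.sum_congr rfl fun a _ => Finset.sum_congr rfl fun b _ => ?_
    have hsym : B⁻¹ b a = B⁻¹ a b := by
      have := hB.inv.isHermitian
      conv_lhs => rw [← this]
      simp [Matrix.conjTranspose_apply]
    rw [hsym]
  -- inverse action
  have hw : M⁻¹ *ᵥ v = (r / (r + s)) • (B⁻¹ *ᵥ v) := by
    have hMw : M *ᵥ ((r / (r + s)) • (B⁻¹ *ᵥ v)) = v := by
      rw [Matrix.mulVec_smul]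
      have h1 : M *ᵥ (B⁻¹ *ᵥ v) = (1 + r⁻¹ * s) • v := by
        rw [hM, Matrix.add_mulVec, Matrix.mulVec_mulVec, Matrix.mul_nonsing_inv _ hBdet,
          Matrix.one_mulVec, Matrix.smul_mulVec, vecMulVec_mulVec']
        rw [smul_smul, ← hs, add_smul, one_smul]
      rw [h1, smul_smul]
      have h2 : r / (r + s) * (1 + r⁻¹ * s) = 1 := by
        field_simp
      rw [h2, one_smul]
    calc M⁻¹ *ᵥ v = M⁻¹ *ᵥ (M *ᵥ ((r / (r + s)) • (B⁻¹ *ᵥ v))) := by rw [hMw]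
    _ = (r / (r + s)) • (B⁻¹ *ᵥ v) := by
        rw [Matrix.mulVec_mulVec, Matrix.nonsing_inv_mul _ hMdet, Matrix.one_mulVec]
  rw [hw, dotProduct_smul, smul_eq_mul, ← hs, hdet]
  have hBd := hB.det_pos
  field_simp
  ring

/-- Telescoping determinant bound: `∑_{t=1}^T x_tᵀ A_t⁻¹ x_t ≤ r log det(A_T)`. -/
theorem sum_quad_form_inv_le_log_det {d : ℕ} (r : ℝ) (hr : 0 < r)
    (x : ℕ → Fin d → ℝ) (A : ℕ → Matrix (Fin d) (Fin d) ℝ)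
    (hA0 : A 0 = 1)
    (hA : ∀ t : ℕ, A (t + 1) = A t + r⁻¹ • Matrix.vecMulVec (x (t + 1)) (x (t + 1)))
    (T : ℕ) :
    ∑ t ∈ Finset.Icc 1 T, x t ⬝ᵥ (A t)⁻¹.mulVec (x t) ≤ r * Real.log (A T).det := by
  have hpd : ∀ t, (A t).PosDef := by
    intro t
    induction t with
    | zero => rw [hA0]; exact Matrix.PosDef.one
    | succ n ih => rw [hA n]; exact ih.add_posSemidef (vecMulVec_posSemidef r hr _)
  induction T with
  | zero => simp [hA0]
  | succ T ih =>
    rw [Finset.sum_Icc_succ_top (by omega : 1 ≤ T + 1)]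
    have hkey := key_identity r hr (x (T + 1)) (A T) (hpd T)
    rw [← hA T] at hkey
    have hstep : x (T + 1) ⬝ᵥ (A (T + 1))⁻¹ *ᵥ x (T + 1)
        ≤ r * (Real.log (A (T + 1)).det - Real.log (A T).det) := by
      rw [hkey]
      have hdT := (hpd T).det_pos
      have hdT1 := (hpd (T + 1)).det_pos
      have hlog : Real.log ((A T).det / (A (T + 1)).det)
          ≤ (A T).det / (A (T + 1)).det - 1 :=
        Real.log_le_sub_one_of_pos (div_pos hdT hdT1)
      rw [Real.log_div (ne_of_gt hdT) (ne_of_gt hdT1)] at hlog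
      nlinarith
    calc ∑ t ∈ Finset.Icc 1 T, x t ⬝ᵥ (A t)⁻¹.mulVec (x t)
          + x (T + 1) ⬝ᵥ (A (T + 1))⁻¹ *ᵥ x (T + 1)
        ≤ r * Real.log (A T).det
          + r * (Real.log (A (T + 1)).det - Real.log (A T).det) := add_le_add ih hstep
    _ = r * Real.log (A (T + 1)).det := by ring
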